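/- Let G be a connected Lie group and H a closed subgroup. If D is a fundamental domain for a discrete subgroup Γ₁ ≤ G₁ and E is a fundamental domain for a discrete subgroup Γ₂ ≤ G₂, and Γ ≤ G₁ × G₂ is a discrete subgroup such that Γ ∩ G₁ = Γ₁ and the projection of Γ to G₂ equals Γ₂, and moreover every element of Γ₂ lifts to an element of Γ, then D × E is a fundamental domain for Γ in G₁ × G₂. -/

import Mathlib

/-- If `D` is a fundamental domain (a measurable set meeting each coset `gΓ₁`
exactly once) for a discrete subgroup `Γ₁ ≤ G₁`, `E` is a fundamental domain
for a discrete subgroup `Γ₂ ≤ G₂`, and `Γ ≤ G₁ × G₂` is a discrete subgroup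
with `Γ ∩ (G₁ × 1) = Γ₁` and `π₂(Γ) = Γ₂` (so every element of `Γ₂` lifts to
`Γ`), then `D × E` is a fundamental domain for `Γ` in `G₁ × G₂`. -/
theorem prod_fundamentalDomain
    {G₁ G₂ : Type*} [Group G₁] [Group G₂]
    [TopologicalSpace G₁] [IsTopologicalGroup G₁]
    [TopologicalSpace G₂] [IsTopologicalGroup G₂]
    [MeasurableSpace G₁] [BorelSpace G₁] [MeasurableSpace G₂] [BorelSpace G₂]
    (Γ : Subgroup (G₁ × G₂)) [DiscreteTopology Γ]
    (Γ₁ : Subgroup G₁) [DiscreteTopology Γ₁] (hΓ₁ : Γ₁ = Γ.comap (MonoidHom.inl G₁ G₂))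
    (Γ₂ : Subgroup G₂) [DiscreteTopology Γ₂] (hΓ₂ : Γ₂ = Γ.map (MonoidHom.snd G₁ G₂))
    (D : Set G₁) (hDmeas : MeasurableSet D) (hD : ∀ g : G₁, ∃! γ : Γ₁, g * (γ : G₁) ∈ D)
    (E : Set G₂) (hEmeas : MeasurableSet E) (hE : ∀ g : G₂, ∃! γ : Γ₂, g * (γ : G₂) ∈ E) :
    MeasurableSet (D ×ˢ E) ∧
      ∀ g : G₁ × G₂, ∃! γ : Γ, g * (γ : G₁ × G₂) ∈ D ×ˢ E := by
  refine ⟨hDmeas.prod hEmeas, fun g => ?_⟩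
  obtain ⟨g₁, g₂⟩ := g
  obtain ⟨γ₂, hγ₂, hγ₂u⟩ := hE g₂
  -- lift γ₂ to Γ
  have hmem : (γ₂ : G₂) ∈ Γ.map (MonoidHom.snd G₁ G₂) := hΓ₂ ▸ γ₂.2
  obtain ⟨δ, hδΓ, hδsnd⟩ := hmem
  have hδ2 : δ.2 = (γ₂ : G₂) := hδsnd
  obtain ⟨γ₁, hγ₁, hγ₁u⟩ := hD (g₁ * δ.1)
  have hγ₁Γ : ((γ₁ : G₁), (1 : G₂)) ∈ Γ := hΓ₁.le γ₁.2
  refine ⟨⟨δ * ((γ₁ : G₁), 1), Γ.mul_mem hδΓ hγ₁Γ⟩, ?_, ?_⟩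
  · constructor
    · simpa [mul_assoc] using hγ₁
    · simpa [hδ2] using hγ₂
  · rintro ⟨γ, hγΓ⟩ ⟨h1, h2⟩
    simp only at h1 h2
    -- second coordinate
    have hsnd : γ.2 ∈ Γ₂ := by
      rw [hΓ₂]; exact ⟨γ, hγΓ, rfl⟩
    have e2 : (⟨γ.2, hsnd⟩ : Γ₂) = γ₂ := hγ₂u ⟨γ.2, hsnd⟩ h2
    have e2' : γ.2 = (γ₂ : G₂) := congrArg Subtype.val e2
    -- δ⁻¹ * γ has second coord 1
    have hres : δ⁻¹ * γ ∈ Γ := Γ.mul_mem (Γ.inv_mem hδΓ) hγΓ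
    have hsnd1 : (δ⁻¹ * γ).2 = 1 := by
      simp [Prod.snd_mul, e2', hδ2]
    have hfst : (δ⁻¹ * γ).1 ∈ Γ₁ := hΓ₁.ge (by
      show ((δ⁻¹ * γ).1, (1:G₂)) ∈ Γ
      rw [← hsnd1]
      exact hres)
    have hD1 : g₁ * δ.1 * ((δ⁻¹ * γ).1) ∈ D := by
      have : g₁ * δ.1 * (δ⁻¹ * γ).1 = g₁ * γ.1 := by
        simp [Prod.fst_mul, mul_assoc]
      rw [this]; exact h1
    have e1 : (⟨(δ⁻¹ * γ).1, hfst⟩ : Γ₁) = γ₁ := hγ₁u _ hD1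
    have e1' : (δ⁻¹ * γ).1 = (γ₁ : G₁) := congrArg Subtype.val e1
    ext
    · show γ.1 = (δ * ((γ₁ : G₁), 1)).1
      simp only [Prod.fst_mul]
      rw [← e1']
      simp [Prod.fst_mul, ← mul_assoc]
    · show γ.2 = (δ * ((γ₁ : G₁), 1)).2
      simp [Prod.snd_mul, e2', hδ2]
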